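/- Let κ be an infinite ordinal with cofinality ω. Then every pruned κ-tree has a path. -/

import Mathlib

/-- `T` (with level function `lev`) is a `κ`-tree: a partial order with a unique minimal
element in which the set of predecessors of any element is a chain mapped
order-isomorphically by `lev` onto an ordinal below `κ` (its order type). -/
structure IsTree {T : Type*} [PartialOrder T] (κ : Ordinal) (lev : T → Ordinal) : Prop where
  root : ∃! r : T, IsMin r
  chainBelow : ∀ a b c : T, b < a → c < a → b < c ∨ b = c ∨ c < b
  lev_lt : ∀ a : T, lev a < κ
  lev_strictMono : ∀ a b : T, a < b → lev a < lev b
  lev_surjOn : ∀ a : T, ∀ i, i < lev a → ∃ b, b < a ∧ lev b = i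

/-- A `κ`-tree is pruned if every element has extensions to all higher levels below `κ`. -/
def IsPruned {T : Type*} [PartialOrder T] (κ : Ordinal) (lev : T → Ordinal) : Prop :=
  ∀ a : T, ∀ β, β < κ → lev a < β → ∃ b : T, a ≤ b ∧ lev b = β

/-- A path through a `κ`-tree: a strictly increasing selection of one node of each
level `γ < κ`. -/
def IsPath {T : Type*} [PartialOrder T] (κ : Ordinal) (lev : T → Ordinal)
    (p : {γ : Ordinal // γ < κ} → T) : Prop :=
  (∀ γ, lev (p γ) = γ.1) ∧ ∀ γ δ : {γ : Ordinal // γ < κ}, γ < δ → p γ < p δ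

/-- Every pruned `κ`-tree, for `κ` an infinite ordinal of cofinality `ω`, has a path. -/
theorem stmt14 {T : Type*} [PartialOrder T] (κ : Ordinal) (lev : T → Ordinal)
    (hκ : Ordinal.omega0 ≤ κ) (hcof : κ.cof = Cardinal.aleph0)
    (ht : IsTree κ lev) (hpr : IsPruned κ lev) :
    ∃ p, IsPath κ lev p := by
  classical
  -- κ is a limit ordinal
  have hlim : Order.IsSuccLimit κ := Ordinal.aleph0_le_cof.mp hcof.ge
  -- a cofinal ω-sequence in κ
  obtain ⟨ι, f, hlsub, hι⟩ := Ordinal.exists_lsub_cof κ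
  have hι' : Cardinal.mk ι = Cardinal.mk (ULift ℕ) := by
    rw [hι, hcof]; simp
  obtain ⟨e⟩ := Cardinal.eq.mp hι'
  set g : ℕ → Ordinal := fun n => f (e.symm ⟨n⟩) with hg
  have hglt : ∀ n, g n < κ := fun n => hlsub ▸ Ordinal.lt_lsub f _
  have hgcof : ∀ β, β < κ → ∃ n, β ≤ g n := by
    intro β hβ
    rw [← hlsub, Ordinal.lt_lsub_iff] at hβ
    obtain ⟨i, hi⟩ := hβ
    exact ⟨(e i).down, by simpa [hg, ULift.up_down] using hi⟩
  -- the root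
  obtain ⟨r, -, -⟩ := ht.root
  -- step function
  have hstep : ∀ (n : ℕ) (x : T), ∃ y : T, x ≤ y ∧ lev y = Order.succ (max (lev x) (g n)) :=
    fun n x => hpr x _ (hlim.succ_lt (max_lt (ht.lev_lt x) (hglt n)))
      ((le_max_left _ _).trans_lt (Order.lt_succ _))
  -- the chain
  set a : ℕ → T := fun n => Nat.rec r (fun n x => Classical.choose (hstep n x)) n with ha
  have haspec : ∀ n, a n ≤ a (n + 1) ∧ lev (a (n + 1)) = Order.succ (max (lev (a n)) (g n)) :=
    fun n => Classical.choose_spec (hstep n (a n))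
  have hamono : Monotone a := monotone_nat_of_le_succ fun n => (haspec n).1
  have haunb : ∀ β, β < κ → ∃ n, β < lev (a n) := by
    intro β hβ
    obtain ⟨m, hm⟩ := hgcof β hβ
    exact ⟨m + 1, hm.trans_lt <| (le_max_right _ _).trans_lt <|
      (haspec m).2 ▸ Order.lt_succ _⟩
  -- uniqueness of nodes of a given level below a common node
  have huniq : ∀ x y z : T, x < z → y < z → lev x = lev y → x = y := by
    intro x y z hx hy hxy
    rcases ht.chainBelow z x y hx hy with h | h | h
    · exact absurd hxy (ht.lev_strictMono x y h).ne
    · exact h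
    · exact absurd hxy.symm (ht.lev_strictMono y x h).ne
  -- existence of a node of each level below some a n
  have hex : ∀ γ : {γ : Ordinal // γ < κ}, ∃ b : T, (∃ n, b < a n) ∧ lev b = γ.1 := by
    intro γ
    obtain ⟨n, hn⟩ := haunb γ.1 γ.2
    obtain ⟨b, hb, hbl⟩ := ht.lev_surjOn (a n) γ.1 hn
    exact ⟨b, ⟨n, hb⟩, hbl⟩
  refine ⟨fun γ => Classical.choose (hex γ), fun γ => (Classical.choose_spec (hex γ)).2, ?_⟩
  intro γ δ hγδ
  obtain ⟨⟨n, hn⟩, hlγ⟩ := Classical.choose_spec (hex γ)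
  obtain ⟨⟨m, hm⟩, hlδ⟩ := Classical.choose_spec (hex δ)
  have h1 : Classical.choose (hex γ) < a (max n m) := hn.trans_le (hamono (le_max_left n m))
  have h2 : Classical.choose (hex δ) < a (max n m) := hm.trans_le (hamono (le_max_right n m))
  rcases ht.chainBelow (a (max n m)) _ _ h1 h2 with h | h | h
  · exact h
  · exact absurd (hlγ.symm.trans (h ▸ hlδ)) (Subtype.coe_lt_coe.mpr hγδ).ne
  · exact absurd (ht.lev_strictMono _ _ h) (by rw [hlγ, hlδ]; exact (Subtype.coe_lt_coe.mpr hγδ).not_gt)
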